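/- Let X be a symmetric real n×n matrix solving the ARE. Let z : [0, ∞) → ℝⁿ be differentiable and v : [0, ∞) → ℝᵐ be continuous with ż(t) = Az(t) + Bv(t) for all t ≥ 0 and z(t) → 0 as t → ∞, and suppose that both t ↦ ‖z(t)‖²_Q + ‖v(t)‖²_R and t ↦ ‖v(t) + R⁻¹BᵀX z(t)‖²_R are integrable on [0, ∞). Then ½∫₀^∞ (‖z(t)‖²_Q + ‖v(t)‖²_R) dt = ½⟨X z(0), z(0)⟩ + ½∫₀^∞ ‖v(t) + R⁻¹BᵀX z(t)‖²_R dt. -/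

import Mathlib

open Matrix MeasureTheory

lemma dp_flip {n m : ℕ} (M : Matrix (Fin n) (Fin m) ℝ) (x : Fin m → ℝ) (y : Fin n → ℝ) :
    M.mulVec x ⬝ᵥ y = x ⬝ᵥ Mᵀ.mulVec y := by
  rw [dotProduct_mulVec, vecMul_transpose, dotProduct_comm]

lemma key_alg {n m : ℕ}
    (A : Matrix (Fin n) (Fin n) ℝ) (B : Matrix (Fin n) (Fin m) ℝ)
    (Q : Matrix (Fin n) (Fin n) ℝ)
    (R : Matrix (Fin m) (Fin m) ℝ) (hR : R.PosDef)
    (X : Matrix (Fin n) (Fin n) ℝ) (hXsymm : Xᵀ = X)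
    (hARE : Aᵀ * X + X * A - X * B * R⁻¹ * Bᵀ * X = -Q)
    (z : Fin n → ℝ) (v : Fin m → ℝ) :
    X.mulVec (A.mulVec z + B.mulVec v) ⬝ᵥ z + X.mulVec z ⬝ᵥ (A.mulVec z + B.mulVec v)
      = R.mulVec (v + (R⁻¹ * Bᵀ * X).mulVec z) ⬝ᵥ (v + (R⁻¹ * Bᵀ * X).mulVec z)
        - (Q.mulVec z ⬝ᵥ z + R.mulVec v ⬝ᵥ v) := by
  have hRT : Rᵀ = R := hR.1.eq
  have hRinv : R * R⁻¹ = 1 := mul_nonsing_inv R (isUnit_iff_ne_zero.mpr hR.det_pos.ne')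
  have hRK : R * (R⁻¹ * Bᵀ * X) = Bᵀ * X := by
    rw [show R⁻¹ * Bᵀ * X = R⁻¹ * (Bᵀ * X) from by rw [Matrix.mul_assoc],
      ← Matrix.mul_assoc, hRinv, Matrix.one_mul]
  have t1 : X.mulVec (A.mulVec z) ⬝ᵥ z = z ⬝ᵥ (Aᵀ * X).mulVec z := by
    rw [mulVec_mulVec, dp_flip, transpose_mul, hXsymm]
  have t2 : X.mulVec (B.mulVec v) ⬝ᵥ z = v ⬝ᵥ (Bᵀ * X).mulVec z := by
    rw [mulVec_mulVec, dp_flip, transpose_mul, hXsymm]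
  have t3 : X.mulVec z ⬝ᵥ A.mulVec z = z ⬝ᵥ (X * A).mulVec z := by
    rw [dp_flip, hXsymm, mulVec_mulVec]
  have t4 : X.mulVec z ⬝ᵥ B.mulVec v = v ⬝ᵥ (Bᵀ * X).mulVec z := by
    rw [dotProduct_comm, dp_flip, mulVec_mulVec]
  have t5 : R.mulVec v ⬝ᵥ ((R⁻¹ * Bᵀ * X).mulVec z) = v ⬝ᵥ (Bᵀ * X).mulVec z := by
    rw [dp_flip, hRT, mulVec_mulVec, hRK]
  have t6 : R.mulVec ((R⁻¹ * Bᵀ * X).mulVec z) ⬝ᵥ v = v ⬝ᵥ (Bᵀ * X).mulVec z := by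
    rw [mulVec_mulVec, hRK, dotProduct_comm]
  have t7 : R.mulVec ((R⁻¹ * Bᵀ * X).mulVec z) ⬝ᵥ ((R⁻¹ * Bᵀ * X).mulVec z)
      = z ⬝ᵥ (X * B * R⁻¹ * Bᵀ * X).mulVec z := by
    rw [mulVec_mulVec, hRK, dp_flip, transpose_mul, transpose_transpose, hXsymm,
      mulVec_mulVec, show X * B * (R⁻¹ * Bᵀ * X) = X * B * R⁻¹ * Bᵀ * X from by
        simp only [Matrix.mul_assoc]]
  have t8 : Q.mulVec z ⬝ᵥ z = z ⬝ᵥ Q.mulVec z := dotProduct_comm _ _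
  have are : z ⬝ᵥ (Aᵀ * X).mulVec z + z ⬝ᵥ (X * A).mulVec z
      - z ⬝ᵥ (X * B * R⁻¹ * Bᵀ * X).mulVec z = -(z ⬝ᵥ Q.mulVec z) := by
    have h : z ⬝ᵥ ((Aᵀ * X + X * A - X * B * R⁻¹ * Bᵀ * X).mulVec z) = z ⬝ᵥ ((-Q).mulVec z) := by
      rw [hARE]
    simpa only [add_mulVec, sub_mulVec, neg_mulVec, dotProduct_add, dotProduct_sub,
      dotProduct_neg] using h
  simp only [mulVec_add, dotProduct_add, add_dotProduct]
  linarith [t1, t2, t3, t4, t5, t6, t7, t8, are]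

lemma quad_hasDerivAt {n : ℕ} (X : Matrix (Fin n) (Fin n) ℝ) {z : ℝ → Fin n → ℝ}
    {w : Fin n → ℝ} {t : ℝ} (hz : HasDerivAt z w t) :
    HasDerivAt (fun s => X.mulVec (z s) ⬝ᵥ z s)
      (X.mulVec w ⬝ᵥ z t + X.mulVec (z t) ⬝ᵥ w) t := by
  have hzi : ∀ i, HasDerivAt (fun s => z s i) (w i) t := fun i => hasDerivAt_pi.1 hz i
  have h : HasDerivAt (fun s => ∑ i, ∑ j, X i j * z s j * z s i)
      (∑ i, ∑ j, ((X i j * w j) * z t i + (X i j * z t j) * w i)) t := by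
    apply HasDerivAt.fun_sum
    intro i _
    apply HasDerivAt.fun_sum
    intro j _
    exact (((hzi j).const_mul (X i j)).mul (hzi i))
  have e1 : (fun s => ∑ i, ∑ j, X i j * z s j * z s i)
      = fun s => X.mulVec (z s) ⬝ᵥ z s := by
    funext s
    simp [mulVec, dotProduct, Finset.sum_mul]
  have e2 : (∑ i, ∑ j, ((X i j * w j) * z t i + (X i j * z t j) * w i))
      = X.mulVec w ⬝ᵥ z t + X.mulVec (z t) ⬝ᵥ w := by
    simp [mulVec, dotProduct, Finset.sum_mul, Finset.sum_add_distrib]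
  rw [e1, e2] at h
  exact h

/-- completion-of-square identity for the forward dynamics and a symmetric
solution of the algebraic Riccati equation. -/
theorem riccati_completion_of_square_forward
    (n m : ℕ) (hn : 1 ≤ n) (hm : 1 ≤ m)
    (A : Matrix (Fin n) (Fin n) ℝ) (B : Matrix (Fin n) (Fin m) ℝ)
    (Q : Matrix (Fin n) (Fin n) ℝ) (hQ : Q.PosDef)
    (R : Matrix (Fin m) (Fin m) ℝ) (hR : R.PosDef)
    (X : Matrix (Fin n) (Fin n) ℝ) (hXsymm : Xᵀ = X)
    (hARE : Aᵀ * X + X * A - X * B * R⁻¹ * Bᵀ * X = -Q)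
    (z : ℝ → Fin n → ℝ) (v : ℝ → Fin m → ℝ)
    (hz : ∀ t ∈ Set.Ici (0 : ℝ),
      HasDerivWithinAt z (A.mulVec (z t) + B.mulVec (v t)) (Set.Ici 0) t)
    (hv : ContinuousOn v (Set.Ici 0))
    (hzlim : Filter.Tendsto z Filter.atTop (nhds 0))
    (hint1 : IntegrableOn
      (fun t => Q.mulVec (z t) ⬝ᵥ z t + R.mulVec (v t) ⬝ᵥ v t) (Set.Ici 0))
    (hint2 : IntegrableOn
      (fun t => R.mulVec (v t + (R⁻¹ * Bᵀ * X).mulVec (z t)) ⬝ᵥ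
        (v t + (R⁻¹ * Bᵀ * X).mulVec (z t))) (Set.Ici 0)) :
    (1 / 2) * ∫ t in Set.Ioi (0 : ℝ), (Q.mulVec (z t) ⬝ᵥ z t + R.mulVec (v t) ⬝ᵥ v t)
      = (1 / 2) * (X.mulVec (z 0) ⬝ᵥ z 0)
        + (1 / 2) * ∫ t in Set.Ioi (0 : ℝ),
            R.mulVec (v t + (R⁻¹ * Bᵀ * X).mulVec (z t)) ⬝ᵥ
              (v t + (R⁻¹ * Bᵀ * X).mulVec (z t)) := by
  set f : ℝ → ℝ := fun t => X.mulVec (z t) ⬝ᵥ z t with hf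
  set g : ℝ → ℝ := fun t =>
    R.mulVec (v t + (R⁻¹ * Bᵀ * X).mulVec (z t)) ⬝ᵥ (v t + (R⁻¹ * Bᵀ * X).mulVec (z t))
      - (Q.mulVec (z t) ⬝ᵥ z t + R.mulVec (v t) ⬝ᵥ v t) with hg
  -- derivative of f
  have hderiv : ∀ t ∈ Set.Ioi (0 : ℝ), HasDerivAt f (g t) t := by
    intro t ht
    have hz' : HasDerivAt z (A.mulVec (z t) + B.mulVec (v t)) t :=
      (hz t (Set.mem_Ici.2 (le_of_lt ht))).hasDerivAt (Ici_mem_nhds ht)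
    have h := quad_hasDerivAt X hz'
    rw [key_alg A B Q R hR X hXsymm hARE (z t) (v t)] at h
    exact h
  -- continuity of f at 0 within Ici 0
  have hF : Continuous (fun w : Fin n → ℝ => X.mulVec w ⬝ᵥ w) :=
    (continuous_const.matrix_mulVec continuous_id).dotProduct continuous_id
  have hcont : ContinuousWithinAt f (Set.Ici 0) 0 :=
    hF.continuousAt.comp_continuousWithinAt (hz 0 Set.self_mem_Ici).continuousWithinAt
  -- limit of f at infinity
  have hlim : Filter.Tendsto f Filter.atTop (nhds 0) := by
    have h0 : X.mulVec (0 : Fin n → ℝ) ⬝ᵥ (0 : Fin n → ℝ) = 0 := by simp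
    have := (hF.continuousAt (x := (0 : Fin n → ℝ))).tendsto.comp hzlim
    rwa [h0] at this
  -- integrabilities on Ioi
  have hI1 : IntegrableOn
      (fun t => Q.mulVec (z t) ⬝ᵥ z t + R.mulVec (v t) ⬝ᵥ v t) (Set.Ioi 0) :=
    hint1.mono_set Set.Ioi_subset_Ici_self
  have hI2 : IntegrableOn
      (fun t => R.mulVec (v t + (R⁻¹ * Bᵀ * X).mulVec (z t)) ⬝ᵥ
        (v t + (R⁻¹ * Bᵀ * X).mulVec (z t))) (Set.Ioi 0) :=
    hint2.mono_set Set.Ioi_subset_Ici_self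
  have hIg : IntegrableOn g (Set.Ioi 0) := hI2.sub hI1
  have key : ∫ t in Set.Ioi (0 : ℝ), g t = 0 - f 0 :=
    integral_Ioi_of_hasDerivAt_of_tendsto hcont hderiv hIg hlim
  have hsplit : ∫ t in Set.Ioi (0 : ℝ), g t
      = (∫ t in Set.Ioi (0 : ℝ),
          R.mulVec (v t + (R⁻¹ * Bᵀ * X).mulVec (z t)) ⬝ᵥ
            (v t + (R⁻¹ * Bᵀ * X).mulVec (z t)))
        - ∫ t in Set.Ioi (0 : ℝ), (Q.mulVec (z t) ⬝ᵥ z t + R.mulVec (v t) ⬝ᵥ v t) :=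
    integral_sub hI2 hI1
  have hf0 : f 0 = X.mulVec (z 0) ⬝ᵥ z 0 := rfl
  rw [hsplit] at key
  linarith [key]
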